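/- Let p be an odd prime and let Γ₁ = (V₁,E₁) and Γ₂ = (V₂,E₂) be undirected loopless finite graphs. Then the graph-algebras R(Γ₁) and R(Γ₂) are isomorphic as (ℤ/p³ℤ)-algebras if and only if the graphs Γ₁ and Γ₂ are isomorphic. -/

import Mathlib

noncomputable section

open MvPolynomial

/-- Pairs `e = (i,j)` with `i < j`, indexing the variables `a_e`. -/
abbrev EPair (n : ℕ) := {e : Fin n × Fin n // e.1 < e.2}

/-- Variables of the polynomial algebra: the `vᵢ` and the `a_e`. -/
abbrev GVar (n : ℕ) := Fin n ⊕ EPair n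

/-- The commutative polynomial algebra `(ℤ/p³ℤ)[v₁,…,vₙ,a₁,…,a_l]`. -/
abbrev GPoly (p n : ℕ) := MvPolynomial (GVar n) (ZMod (p ^ 3))

/-- The generators of the ideal `I` of relations of the graph-algebra `R(Γ)`:
`vᵢ² = 0`; `vᵢ·vⱼ = vⱼ·vᵢ = a_e` for `e = (i,j)`, `i < j`; `a_e·vᵢ = vᵢ·a_e = 0`;
`a_e·a_f = 0`; `p·a_e = 0` if `e ∈ E` and `p²·a_e = 0` if `e ∉ E`. -/
def graphRels (p : ℕ) {n : ℕ} (G : SimpleGraph (Fin n)) : Set (GPoly p n) :=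
  {r | (∃ i : Fin n, r = X (Sum.inl i) ^ 2) ∨
       (∃ e : EPair n, r = X (Sum.inl e.1.1) * X (Sum.inl e.1.2) - X (Sum.inr e)) ∨
       (∃ e : EPair n, r = X (Sum.inl e.1.2) * X (Sum.inl e.1.1) - X (Sum.inr e)) ∨
       (∃ (e : EPair n) (i : Fin n), r = X (Sum.inr e) * X (Sum.inl i)) ∨
       (∃ e f : EPair n, r = X (Sum.inr e) * X (Sum.inr f)) ∨
       (∃ e : EPair n, G.Adj e.1.1 e.1.2 ∧ r = (p : GPoly p n) * X (Sum.inr e)) ∨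
       (∃ e : EPair n, ¬G.Adj e.1.1 e.1.2 ∧ r = (p : GPoly p n) ^ 2 * X (Sum.inr e))}

/-- The graph-algebra `R(Γ) = (ℤ/p³ℤ)[v₁,…,vₙ,a₁,…,a_l]/I`. -/
abbrev GraphAlg (p : ℕ) {n : ℕ} (G : SimpleGraph (Fin n)) :=
  GPoly p n ⧸ Ideal.span (graphRels p G)

/-- The image of the variable `vᵢ` in `R(Γ)`. -/
def GraphAlg.v (p : ℕ) {n : ℕ} (G : SimpleGraph (Fin n)) (i : Fin n) : GraphAlg p G :=
  Ideal.Quotient.mk _ (X (Sum.inl i))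

/-- The image of the variable `a_e` in `R(Γ)`. -/
def GraphAlg.a (p : ℕ) {n : ℕ} (G : SimpleGraph (Fin n)) (e : EPair n) : GraphAlg p G :=
  Ideal.Quotient.mk _ (X (Sum.inr e))


namespace GA

variable (p : ℕ) {n : ℕ} (G : SimpleGraph (Fin n))

open Classical in
def qe (e : EPair n) : ℕ := if G.Adj e.1.1 e.1.2 then p else p ^ 2

lemma qe_dvd_sq (e : EPair n) : qe p G e ∣ p ^ 2 := by
  unfold qe; split
  · exact dvd_pow_self p (by norm_num)
  · exact dvd_rfl

lemma qe_dvd (e : EPair n) : qe p G e ∣ p ^ 3 :=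
  (qe_dvd_sq p G e).trans (pow_dvd_pow p (by norm_num))

lemma qe_of_adj {e : EPair n} (h : G.Adj e.1.1 e.1.2) : qe p G e = p := by
  unfold qe; rw [if_pos h]

lemma qe_of_not_adj {e : EPair n} (h : ¬ G.Adj e.1.1 e.1.2) : qe p G e = p ^ 2 := by
  unfold qe; rw [if_neg h]

lemma dvd_qe (e : EPair n) : p ∣ qe p G e := by
  unfold qe; split
  · exact dvd_rfl
  · exact dvd_pow_self p (by norm_num)

@[ext]
structure Md (p : ℕ) {n : ℕ} (G : SimpleGraph (Fin n)) where
  c : ZMod (p ^ 3)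
  v : Fin n → ZMod (p ^ 3)
  a : ∀ e : EPair n, ZMod (qe p G e)

namespace Md

def κ (e : EPair n) : ZMod (p ^ 3) →+* ZMod (qe p G e) :=
  ZMod.castHom (qe_dvd p G e) _

def sym (v w : Fin n → ZMod (p ^ 3)) (e : EPair n) : ZMod (p ^ 3) :=
  v e.1.1 * w e.1.2 + v e.1.2 * w e.1.1

variable {p G}

instance : Zero (Md p G) := ⟨⟨0, 0, fun _ => 0⟩⟩
instance : One (Md p G) := ⟨⟨1, 0, fun _ => 0⟩⟩
instance : Add (Md p G) := ⟨fun x y => ⟨x.c + y.c, x.v + y.v, fun e => x.a e + y.a e⟩⟩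
instance : Neg (Md p G) := ⟨fun x => ⟨-x.c, -x.v, fun e => -(x.a e)⟩⟩
instance : Mul (Md p G) :=
  ⟨fun x y => ⟨x.c * y.c, x.c • y.v + y.c • x.v,
    fun e => κ p G e x.c * y.a e + κ p G e y.c * x.a e + κ p G e (sym p x.v y.v e)⟩⟩

@[simp] lemma zero_c : (0 : Md p G).c = 0 := rfl
@[simp] lemma zero_v : (0 : Md p G).v = 0 := rfl
@[simp] lemma zero_a (e) : (0 : Md p G).a e = 0 := rfl
@[simp] lemma one_c : (1 : Md p G).c = 1 := rfl
@[simp] lemma one_v : (1 : Md p G).v = 0 := rfl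
@[simp] lemma one_a (e) : (1 : Md p G).a e = 0 := rfl
@[simp] lemma add_c (x y : Md p G) : (x + y).c = x.c + y.c := rfl
@[simp] lemma add_v (x y : Md p G) : (x + y).v = x.v + y.v := rfl
@[simp] lemma add_a (x y : Md p G) (e) : (x + y).a e = x.a e + y.a e := rfl
@[simp] lemma neg_c (x : Md p G) : (-x).c = -x.c := rfl
@[simp] lemma neg_v (x : Md p G) : (-x).v = -x.v := rfl
@[simp] lemma neg_a (x : Md p G) (e) : (-x).a e = -(x.a e) := rfl
@[simp] lemma mul_c (x y : Md p G) : (x * y).c = x.c * y.c := rfl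
@[simp] lemma mul_v (x y : Md p G) : (x * y).v = x.c • y.v + y.c • x.v := rfl
@[simp] lemma mul_a (x y : Md p G) (e) :
    (x * y).a e = κ p G e x.c * y.a e + κ p G e y.c * x.a e + κ p G e (sym p x.v y.v e) := rfl

lemma sym_apply (v w : Fin n → ZMod (p ^ 3)) (e : EPair n) :
    sym p v w e = v e.1.1 * w e.1.2 + v e.1.2 * w e.1.1 := rfl

private lemma law_add_assoc (x y z : Md p G) : x + y + z = x + (y + z) := by ext <;> simp <;> ring
private lemma law_zero_add (x : Md p G) : 0 + x = x := by ext <;> simp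
private lemma law_add_zero (x : Md p G) : x + 0 = x := by ext <;> simp
private lemma law_add_comm (x y : Md p G) : x + y = y + x := by ext <;> simp <;> ring
private lemma law_neg_add (x : Md p G) : -x + x = 0 := by ext <;> simp
private lemma law_mul_assoc (x y z : Md p G) : x * y * z = x * (y * z) := by
  ext <;> simp [sym_apply, map_add, map_mul, mul_add, add_mul, Pi.add_apply, Pi.smul_apply,
      smul_eq_mul] <;> ring
private lemma law_one_mul (x : Md p G) : 1 * x = x := by ext <;> simp [sym_apply]
private lemma law_mul_one (x : Md p G) : x * 1 = x := by ext <;> simp [sym_apply]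
private lemma law_ldistrib (x y z : Md p G) : x * (y + z) = x * y + x * z := by
  ext <;> simp [sym_apply, mul_add, add_mul, Pi.add_apply, Pi.smul_apply, smul_eq_mul,
      map_add, map_mul] <;> ring
private lemma law_rdistrib (x y z : Md p G) : (x + y) * z = x * z + y * z := by
  ext <;> simp [sym_apply, mul_add, add_mul, Pi.add_apply, Pi.smul_apply, smul_eq_mul,
      map_add, map_mul] <;> ring
private lemma law_zero_mul (x : Md p G) : 0 * x = 0 := by ext <;> simp [sym_apply]
private lemma law_mul_zero (x : Md p G) : x * 0 = 0 := by ext <;> simp [sym_apply]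
private lemma law_mul_comm (x y : Md p G) : x * y = y * x := by ext <;> simp [sym_apply] <;> ring

instance : CommRing (Md p G) where
  add_assoc := law_add_assoc
  zero_add := law_zero_add
  add_zero := law_add_zero
  add_comm := law_add_comm
  neg_add_cancel := law_neg_add
  mul_assoc := law_mul_assoc
  one_mul := law_one_mul
  mul_one := law_mul_one
  left_distrib := law_ldistrib
  right_distrib := law_rdistrib
  zero_mul := law_zero_mul
  mul_zero := law_mul_zero
  mul_comm := law_mul_comm
  natCast m := ⟨m, 0, 0⟩
  natCast_zero := by ext <;> simp
  natCast_succ m := by ext <;> simp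
  intCast m := ⟨m, 0, 0⟩
  intCast_ofNat m := Md.ext
    (by show ((m : ℤ) : ZMod (p ^ 3)) = ((m : ℕ) : ZMod (p ^ 3)); push_cast; ring) rfl rfl
  intCast_negSucc m := Md.ext
    (by show ((Int.negSucc m : ℤ) : ZMod (p ^ 3)) = -((m + 1 : ℕ) : ZMod (p ^ 3));
        push_cast; ring)
    (by funext i; exact neg_zero.symm) (by funext e; exact neg_zero.symm)
  nsmul m x := ⟨m • x.c, m • x.v, fun e => m • x.a e⟩
  nsmul_zero x := Md.ext (by show 0 • x.c = 0; simp) (by show 0 • x.v = 0; simp)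
    (by funext e; show 0 • x.a e = 0; simp)
  nsmul_succ m x := Md.ext (by show (m + 1) • x.c = m • x.c + x.c; simp [add_smul])
    (by show (m + 1) • x.v = m • x.v + x.v; simp [add_smul])
    (by funext e; show (m + 1) • x.a e = m • x.a e + x.a e; simp [add_smul])
  zsmul m x := ⟨m • x.c, m • x.v, fun e => m • x.a e⟩
  zsmul_zero' x := Md.ext (by show (0 : ℤ) • x.c = 0; simp) (by show (0 : ℤ) • x.v = 0; simp)
    (by funext e; show (0 : ℤ) • x.a e = 0; simp)
  zsmul_succ' m x := Md.ext
    (by show ((m : ℤ) + 1) • x.c = (m : ℤ) • x.c + x.c; simp [add_smul])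
    (by show ((m : ℤ) + 1) • x.v = (m : ℤ) • x.v + x.v; simp [add_smul])
    (by funext e; show ((m : ℤ) + 1) • x.a e = (m : ℤ) • x.a e + x.a e; simp [add_smul])
  zsmul_neg' m x := Md.ext
    (by show Int.negSucc m • x.c = -(((m + 1 : ℕ) : ℤ) • x.c); simp [Int.negSucc_eq, neg_smul]; ring)
    (by show Int.negSucc m • x.v = -(((m + 1 : ℕ) : ℤ) • x.v); simp [Int.negSucc_eq, neg_smul]; ring)
    (by funext e; show Int.negSucc m • x.a e = -(((m + 1 : ℕ) : ℤ) • x.a e)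
        simp [Int.negSucc_eq, neg_smul]; ring)
@[simp] lemma natCast_c (m : ℕ) : (m : Md p G).c = m := rfl
@[simp] lemma natCast_v (m : ℕ) : (m : Md p G).v = 0 := rfl
@[simp] lemma natCast_a (m : ℕ) (e) : (m : Md p G).a e = 0 := rfl

variable (p G) in
def structMap : ZMod (p ^ 3) →+* Md p G where
  toFun c := ⟨c, 0, 0⟩
  map_one' := by ext <;> simp
  map_mul' x y := by ext <;> simp [sym_apply]
  map_zero' := by ext <;> simp
  map_add' x y := by ext <;> simp

instance : Algebra (ZMod (p ^ 3)) (Md p G) := (structMap p G).toAlgebra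

@[simp] lemma algebraMap_c (c : ZMod (p ^ 3)) : (algebraMap (ZMod (p ^ 3)) (Md p G) c).c = c := rfl
@[simp] lemma algebraMap_v (c : ZMod (p ^ 3)) : (algebraMap (ZMod (p ^ 3)) (Md p G) c).v = 0 := rfl
@[simp] lemma algebraMap_a (c : ZMod (p ^ 3)) (e) :
    (algebraMap (ZMod (p ^ 3)) (Md p G) c).a e = 0 := rfl

@[simp] lemma smul_c (c : ZMod (p ^ 3)) (x : Md p G) : (c • x).c = c * x.c := by
  rw [Algebra.smul_def]; simp
@[simp] lemma smul_v (c : ZMod (p ^ 3)) (x : Md p G) : (c • x).v = c • x.v := by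
  rw [Algebra.smul_def]; ext i; simp
@[simp] lemma smul_a (c : ZMod (p ^ 3)) (x : Md p G) (e) :
    (c • x).a e = κ p G e c * x.a e := by
  rw [Algebra.smul_def]; simp [sym_apply]


variable (p G) in
def Vg (i : Fin n) : Md p G := ⟨0, Pi.single i 1, 0⟩

variable (p G) in
def Ag (e : EPair n) : Md p G := ⟨0, 0, Pi.single e 1⟩

@[simp] lemma Vg_c (i : Fin n) : (Vg p G i).c = 0 := rfl
@[simp] lemma Vg_v (i : Fin n) : (Vg p G i).v = Pi.single i 1 := rfl
@[simp] lemma Vg_a (i : Fin n) (e) : (Vg p G i).a e = 0 := rfl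
@[simp] lemma Ag_c (e : EPair n) : (Ag p G e).c = 0 := rfl
@[simp] lemma Ag_v (e : EPair n) : (Ag p G e).v = 0 := rfl
@[simp] lemma Ag_a (e f : EPair n) :
    (Ag p G e).a f = Pi.single (M := fun e' : EPair n => ZMod (qe p G e')) e 1 f := rfl

lemma epair_ne (e : EPair n) : e.1.1 ≠ e.1.2 := ne_of_lt e.2

lemma epair_eq {e f : EPair n} (h1 : f.1.1 = e.1.1) (h2 : f.1.2 = e.1.2) : f = e :=
  Subtype.ext (Prod.ext h1 h2)

lemma Vg_mul_Vg (e : EPair n) : Vg p G e.1.1 * Vg p G e.1.2 = Ag p G e := by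
  ext
  · simp
  · simp
  · rename_i f
    simp only [Md.mul_a, Vg_c, map_zero, Vg_a, mul_zero, zero_mul, zero_add, Ag_a,
      Md.sym_apply, Vg_v, add_zero]
    have h2 : Pi.single (M := fun _ : Fin n => ZMod (p ^ 3)) e.1.1 1 f.1.2 *
        Pi.single (M := fun _ : Fin n => ZMod (p ^ 3)) e.1.2 1 f.1.1 = 0 := by
      by_cases hA : f.1.2 = e.1.1
      · by_cases hB : f.1.1 = e.1.2
        · exact absurd (hB ▸ hA ▸ f.2) (lt_asymm e.2)
        · rw [Pi.single_eq_of_ne hB, mul_zero]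
      · rw [Pi.single_eq_of_ne hA, zero_mul]
    rw [h2, add_zero]
    by_cases hf : f = e
    · subst hf
      simp
    · rw [Pi.single_eq_of_ne hf]
      by_cases hA : f.1.1 = e.1.1
      · have hB : f.1.2 ≠ e.1.2 := fun hB => hf (epair_eq hA hB)
        rw [Pi.single_eq_of_ne hB, mul_zero, map_zero]
      · rw [Pi.single_eq_of_ne hA, zero_mul, map_zero]

lemma Vg_sq (i : Fin n) : Vg p G i * Vg p G i = 0 := by
  ext
  · simp
  · simp
  · rename_i f
    have hz : ∀ x y : Fin n, x ≠ y →
        Pi.single (M := fun _ : Fin n => ZMod (p ^ 3)) i 1 x *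
        Pi.single (M := fun _ : Fin n => ZMod (p ^ 3)) i 1 y = 0 := by
      intro x y hxy
      by_cases hA : x = i
      · have hB : y ≠ i := fun hB => hxy (hA.trans hB.symm)
        rw [Pi.single_eq_of_ne hB, mul_zero]
      · rw [Pi.single_eq_of_ne hA, zero_mul]
    simp only [Md.mul_a, Vg_c, map_zero, Vg_a, mul_zero, zero_mul, zero_add, Md.sym_apply,
      Vg_v, Md.zero_a, hz f.1.1 f.1.2 (epair_ne f), hz f.1.2 f.1.1 (epair_ne f).symm,
      add_zero]

lemma Ag_mul (e : EPair n) (x : Md p G) (hx : x.c = 0) : Ag p G e * x = 0 := by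
  ext
  · simp [hx]
  · simp [hx]
  · rename_i f
    simp [hx, Md.sym_apply]

lemma natCast_mul_Ag (m : ℕ) (e : EPair n) (h : qe p G e ∣ m) :
    (m : Md p G) * Ag p G e = 0 := by
  ext
  · simp
  · simp
  · rename_i f
    simp only [Md.mul_a, Md.natCast_c, Md.natCast_a, Md.natCast_v, Ag_c, map_zero, Ag_a,
      Md.sym_apply, Md.zero_a, Ag_v, mul_zero, zero_mul, add_zero, zero_add, map_natCast,
      Pi.zero_apply]
    by_cases hf : f = e
    · subst hf
      rw [Pi.single_eq_same, mul_one, ZMod.natCast_eq_zero_iff]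
      exact h
    · rw [Pi.single_eq_of_ne hf, mul_zero]

variable (p G) in
def genMap : GVar n → Md p G := Sum.elim (Vg p G) (Ag p G)

lemma rels_mapped : ∀ r ∈ graphRels p G, aeval (genMap p G) r = (0 : Md p G) := by
  rintro r (⟨i, rfl⟩ | ⟨e, rfl⟩ | ⟨e, rfl⟩ | ⟨e, i, rfl⟩ | ⟨e, f, rfl⟩ | ⟨e, he, rfl⟩ |
    ⟨e, he, rfl⟩)
  · rw [map_pow, aeval_X]
    show Vg p G i ^ 2 = 0
    rw [sq, Vg_sq]
  · rw [map_sub, map_mul, aeval_X, aeval_X, aeval_X]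
    show Vg p G e.1.1 * Vg p G e.1.2 - Ag p G e = 0
    rw [Vg_mul_Vg, sub_self]
  · rw [map_sub, map_mul, aeval_X, aeval_X, aeval_X]
    show Vg p G e.1.2 * Vg p G e.1.1 - Ag p G e = 0
    rw [mul_comm, Vg_mul_Vg, sub_self]
  · rw [map_mul, aeval_X, aeval_X]
    exact Ag_mul e (Vg p G i) rfl
  · rw [map_mul, aeval_X, aeval_X]
    exact Ag_mul e (Ag p G f) rfl
  · rw [map_mul, map_natCast, aeval_X]
    exact natCast_mul_Ag p e (dvd_of_eq (qe_of_adj p G he))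
  · rw [map_mul, map_pow, map_natCast, aeval_X, ← Nat.cast_pow]
    exact natCast_mul_Ag (p ^ 2) e (dvd_of_eq (qe_of_not_adj p G he))

variable (p G) in
def π : GraphAlg p G →ₐ[ZMod (p ^ 3)] Md p G :=
  Ideal.Quotient.liftₐ _ (aeval (genMap p G)) (fun a ha => by
    have hle : Ideal.span (graphRels p G) ≤ RingHom.ker (aeval (genMap p G) :
        GPoly p n →ₐ[ZMod (p ^ 3)] Md p G) :=
      Ideal.span_le.mpr (fun r hr => rels_mapped r hr)
    exact hle ha)

@[simp] lemma π_mk (x : GPoly p n) :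
    π p G (Ideal.Quotient.mk _ x) = aeval (genMap p G) x := rfl

@[simp] lemma π_v (i : Fin n) : π p G (GraphAlg.v p G i) = Vg p G i := by
  show π p G (Ideal.Quotient.mk _ (X (Sum.inl i))) = _
  rw [π_mk, aeval_X]; rfl

@[simp] lemma π_a (e : EPair n) : π p G (GraphAlg.a p G e) = Ag p G e := by
  show π p G (Ideal.Quotient.mk _ (X (Sum.inr e))) = _
  rw [π_mk, aeval_X]; rfl


/-! ### Relations in the quotient algebra -/

section Rels
set_option synthInstance.maxHeartbeats 400000
set_option maxHeartbeats 1000000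
variable (p) {n : ℕ} (G : SimpleGraph (Fin n))

lemma rel_mem {r : GPoly p n} (hr : r ∈ graphRels p G) :
    Ideal.Quotient.mk (Ideal.span (graphRels p G)) r = 0 :=
  Ideal.Quotient.eq_zero_iff_mem.mpr (Ideal.subset_span hr)

lemma rel_vsq (i : Fin n) : GraphAlg.v p G i * GraphAlg.v p G i = 0 := by
  have := rel_mem p G (Or.inl ⟨i, rfl⟩)
  rw [RingHom.map_pow, sq] at this
  exact this

lemma rel_vv (e : EPair n) :
    GraphAlg.v p G e.1.1 * GraphAlg.v p G e.1.2 = GraphAlg.a p G e := by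
  have := rel_mem p G (Or.inr (Or.inl ⟨e, rfl⟩))
  rw [RingHom.map_sub, RingHom.map_mul, sub_eq_zero] at this
  exact this

lemma rel_av (e : EPair n) (i : Fin n) :
    GraphAlg.a p G e * GraphAlg.v p G i = 0 := by
  have := rel_mem p G (Or.inr (Or.inr (Or.inr (Or.inl ⟨e, i, rfl⟩))))
  rw [RingHom.map_mul] at this
  exact this

lemma rel_aa (e f : EPair n) : GraphAlg.a p G e * GraphAlg.a p G f = 0 := by
  have := rel_mem p G (Or.inr (Or.inr (Or.inr (Or.inr (Or.inl ⟨e, f, rfl⟩)))))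
  rw [RingHom.map_mul] at this
  exact this

lemma rel_pa {e : EPair n} (he : G.Adj e.1.1 e.1.2) :
    ((p : ℕ) : ZMod (p ^ 3)) • GraphAlg.a p G e = 0 := by
  have h0 := rel_mem p G (Or.inr (Or.inr (Or.inr (Or.inr (Or.inr (Or.inl ⟨e, he, rfl⟩))))))
  have h2 : ((p : GPoly p n) * X (Sum.inr e)) =
      ((p : ℕ) : ZMod (p ^ 3)) • (X (Sum.inr e) : GPoly p n) := by
    rw [MvPolynomial.smul_eq_C_mul, map_natCast (C : ZMod (p ^ 3) →+* GPoly p n) p]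
  rw [h2] at h0
  have h3 := map_smul (Ideal.Quotient.mkₐ (ZMod (p ^ 3)) (Ideal.span (graphRels p G)))
    ((p : ℕ) : ZMod (p ^ 3)) (X (Sum.inr e) : GPoly p n)
  rw [Ideal.Quotient.mkₐ_eq_mk] at h3
  rw [h3] at h0
  exact h0

lemma rel_vv' {i j : Fin n} (hij : i ≠ j) :
    ∃ e : EPair n, GraphAlg.v p G i * GraphAlg.v p G j = GraphAlg.a p G e ∧
      ((i = e.1.1 ∧ j = e.1.2) ∨ (i = e.1.2 ∧ j = e.1.1)) := by
  rcases lt_or_gt_of_ne hij with h | h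
  · exact ⟨⟨(i, j), h⟩, rel_vv p G ⟨(i, j), h⟩, Or.inl ⟨rfl, rfl⟩⟩
  · refine ⟨⟨(j, i), h⟩, ?_, Or.inr ⟨rfl, rfl⟩⟩
    have := rel_vv p G ⟨(j, i), h⟩
    rw [mul_comm] at this
    exact this

/-! ### Spanning of the graph algebra by `1`, the `vᵢ` and the `a_e` -/

variable {p G} in
def bas : Option (GVar n) → GraphAlg p G :=
  fun t => t.elim 1 (fun s => Ideal.Quotient.mk _ (X s))

lemma bas_mul_bas (s t : Option (GVar n)) :
    bas (p := p) (G := G) s * bas t ∈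
      Submodule.span (ZMod (p ^ 3)) (Set.range (bas (p := p) (G := G))) := by
  set S := Submodule.span (ZMod (p ^ 3)) (Set.range (bas (p := p) (G := G))) with hS
  have hmem : ∀ t, bas (p := p) (G := G) t ∈ S := fun t => Submodule.subset_span ⟨t, rfl⟩
  match s, t with
  | none, t => rw [show bas none = (1 : GraphAlg p G) from rfl, one_mul]; exact hmem t
  | some s, none => rw [show bas none = (1 : GraphAlg p G) from rfl, mul_one]; exact hmem _
  | some (Sum.inl i), some (Sum.inl j) =>
      by_cases hij : i = j
      · subst hij
        rw [show bas (some (Sum.inl i)) = GraphAlg.v p G i from rfl, rel_vsq]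
        exact S.zero_mem
      · obtain ⟨e, he, -⟩ := rel_vv' p G hij
        rw [show bas (some (Sum.inl i)) = GraphAlg.v p G i from rfl,
          show bas (some (Sum.inl j)) = GraphAlg.v p G j from rfl, he]
        exact hmem (some (Sum.inr e))
  | some (Sum.inl i), some (Sum.inr e) =>
      rw [show bas (some (Sum.inl i)) = GraphAlg.v p G i from rfl,
        show bas (some (Sum.inr e)) = GraphAlg.a p G e from rfl, mul_comm, rel_av]
      exact S.zero_mem
  | some (Sum.inr e), some (Sum.inl i) =>
      rw [show bas (some (Sum.inl i)) = GraphAlg.v p G i from rfl,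
        show bas (some (Sum.inr e)) = GraphAlg.a p G e from rfl, rel_av]
      exact S.zero_mem
  | some (Sum.inr e), some (Sum.inr f) =>
      rw [show bas (some (Sum.inr e)) = GraphAlg.a p G e from rfl,
        show bas (some (Sum.inr f)) = GraphAlg.a p G f from rfl, rel_aa]
      exact S.zero_mem

lemma mem_span_bas (x : GraphAlg p G) :
    ∃ co : Option (GVar n) → ZMod (p ^ 3), x = ∑ t, co t • bas t := by
  set S := Submodule.span (ZMod (p ^ 3)) (Set.range (bas (p := p) (G := G))) with hS
  have hmem : ∀ t, bas (p := p) (G := G) t ∈ S := fun t => Submodule.subset_span ⟨t, rfl⟩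
  have hmul : ∀ x y : GraphAlg p G, x ∈ S → y ∈ S → x * y ∈ S := by
    intro x y hx hy
    induction hx using Submodule.span_induction with
    | mem x hx =>
        obtain ⟨s, rfl⟩ := hx
        induction hy using Submodule.span_induction with
        | mem y hy => obtain ⟨t, rfl⟩ := hy; exact bas_mul_bas p G s t
        | zero => rw [mul_zero]; exact S.zero_mem
        | add y z _ _ hy hz => rw [mul_add]; exact S.add_mem hy hz
        | smul c y _ hy => rw [mul_smul_comm]; exact S.smul_mem c hy
    | zero => rw [zero_mul]; exact S.zero_mem
    | add x z _ _ hx hz => rw [add_mul]; exact S.add_mem hx hz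
    | smul c x _ hx => rw [smul_mul_assoc]; exact S.smul_mem c hx
  have hall : ∀ f : GPoly p n, Ideal.Quotient.mk (Ideal.span (graphRels p G)) f ∈ S := by
    intro f
    induction f using MvPolynomial.induction_on with
    | C c =>
        have h1 : Ideal.Quotient.mk (Ideal.span (graphRels p G)) (C c)
            = c • (1 : GraphAlg p G) := by
          have h2 : (C c : GPoly p n) = c • (1 : GPoly p n) := by
            rw [Algebra.smul_def, mul_one]; rfl
          rw [h2]
          have h3 := map_smul (Ideal.Quotient.mkₐ (ZMod (p ^ 3))
            (Ideal.span (graphRels p G))) c (1 : GPoly p n)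
          rw [Ideal.Quotient.mkₐ_eq_mk] at h3
          rw [h3, map_one]
        rw [h1]
        exact S.smul_mem c (hmem none)
    | add f g hf hg => rw [RingHom.map_add]; exact S.add_mem hf hg
    | mul_X f s hf =>
        rw [RingHom.map_mul]
        exact hmul _ _ hf (hmem (some s))
  obtain ⟨f, rfl⟩ := Ideal.Quotient.mk_surjective x
  obtain ⟨co, hco⟩ := (Submodule.mem_span_range_iff_exists_fun _).mp (hall f)
  exact ⟨co, hco.symm⟩

end Rels

/-! ### Number-theoretic helper lemmas -/

section NT
variable {p : ℕ} [hp : Fact p.Prime]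

variable (p) in
def red : ZMod (p ^ 3) →+* ZMod p := ZMod.castHom (dvd_pow_self p (by norm_num)) _

lemma neZero_p3 : NeZero (p ^ 3) := ⟨pow_ne_zero 3 hp.out.ne_zero⟩

lemma val_natCast_eq (z : ZMod (p ^ 3)) : ((z.val : ℕ) : ZMod (p ^ 3)) = z := by
  haveI := neZero_p3 (p := p)
  rw [ZMod.natCast_val, ZMod.cast_id]

lemma red_eq_val (z : ZMod (p ^ 3)) : red p z = ((z.val : ℕ) : ZMod p) := by
  haveI := neZero_p3 (p := p)
  rw [red, ZMod.castHom_apply, ZMod.natCast_val]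

lemma red_p2_mul (d : ZMod (p ^ 3)) : red p (((p ^ 2 : ℕ) : ZMod (p ^ 3)) * d) = 0 := by
  rw [map_mul, map_natCast, (ZMod.natCast_eq_zero_iff _ _).mpr
    (dvd_pow_self p (by norm_num)), zero_mul]

lemma sq_zero {z : ZMod (p ^ 3)} (h : z * z = 0) :
    ∃ d : ZMod (p ^ 3), z = ((p ^ 2 : ℕ) : ZMod (p ^ 3)) * d := by
  haveI := neZero_p3 (p := p)
  have h1 : ((z.val * z.val : ℕ) : ZMod (p ^ 3)) = 0 := by
    push_cast
    rw [val_natCast_eq, h]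
  have h2 : p ^ 3 ∣ z.val * z.val := (ZMod.natCast_eq_zero_iff _ _).mp h1
  have hpm : p ∣ z.val := by
    refine hp.out.dvd_of_dvd_pow (n := 2) ?_
    rw [sq]
    exact (dvd_pow_self p (by norm_num)).trans h2
  obtain ⟨k, hk⟩ := hpm
  have h3 : p ∣ k := by
    refine hp.out.dvd_of_dvd_pow (n := 2) ?_
    have h4 : p ^ 2 * p ∣ p ^ 2 * (k * k) := by
      calc p ^ 2 * p = p ^ 3 := by ring
      _ ∣ z.val * z.val := h2
      _ = p ^ 2 * (k * k) := by rw [hk]; ring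
    rw [sq]
    exact (Nat.mul_dvd_mul_iff_left (pow_pos hp.out.pos 2)).mp h4
  obtain ⟨j, hj⟩ := h3
  refine ⟨(j : ZMod (p ^ 3)), ?_⟩
  rw [← val_natCast_eq z, hk, hj]
  push_cast
  ring

variable {n : ℕ} {G : SimpleGraph (Fin n)}

lemma κ_p2_mul (f : EPair n) (z : ZMod (p ^ 3)) :
    Md.κ p G f (((p ^ 2 : ℕ) : ZMod (p ^ 3)) * z) = 0 := by
  rw [map_mul, map_natCast, (ZMod.natCast_eq_zero_iff _ _).mpr (qe_dvd_sq p G f),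
    zero_mul]

lemma κ_zero_red (f : EPair n) (z : ZMod (p ^ 3)) (h : Md.κ p G f z = 0) : red p z = 0 := by
  haveI := neZero_p3 (p := p)
  have h1 : ((z.val : ℕ) : ZMod (qe p G f)) = 0 := by
    rw [ZMod.natCast_val]
    rw [Md.κ, ZMod.castHom_apply] at h
    exact h
  have h2 : p ∣ z.val := (dvd_qe p G f).trans ((ZMod.natCast_eq_zero_iff _ _).mp h1)
  rw [red_eq_val, (ZMod.natCast_eq_zero_iff _ _).mpr h2]

lemma pκ_zero_red (f : EPair n) (hf : ¬ G.Adj f.1.1 f.1.2) (z : ZMod (p ^ 3))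
    (h : ((p : ℕ) : ZMod (qe p G f)) * Md.κ p G f z = 0) : red p z = 0 := by
  haveI := neZero_p3 (p := p)
  have h1 : ((p * z.val : ℕ) : ZMod (qe p G f)) = 0 := by
    push_cast
    rw [ZMod.natCast_val]
    rw [Md.κ, ZMod.castHom_apply] at h
    exact h
  have h2 : qe p G f ∣ p * z.val := (ZMod.natCast_eq_zero_iff _ _).mp h1
  rw [qe_of_not_adj p G hf] at h2
  have h3 : p ∣ z.val := by
    have h4 : p * p ∣ p * z.val := by rw [← sq]; exact h2
    exact (Nat.mul_dvd_mul_iff_left hp.out.pos).mp h4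
  rw [red_eq_val, (ZMod.natCast_eq_zero_iff _ _).mpr h3]

lemma two_ne_zero' (hodd : p ≠ 2) : (2 : ZMod p) ≠ 0 := by
  intro h
  have h2 : ((2 : ℕ) : ZMod p) = 0 := by exact_mod_cast h
  have := (ZMod.natCast_eq_zero_iff 2 p).mp h2
  exact hodd ((Nat.prime_dvd_prime_iff_eq hp.out Nat.prime_two).mp this)

end NT

/-! ### The key extraction lemma -/

section Key
variable {p : ℕ} [hp : Fact p.Prime]

lemma key (hodd : p ≠ 2) {n₁ n₂ : ℕ} (Γ₁ : SimpleGraph (Fin n₁)) (Γ₂ : SimpleGraph (Fin n₂))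
    (φ : GraphAlg p Γ₁ ≃ₐ[ZMod (p ^ 3)] GraphAlg p Γ₂) :
    ∃ σ : Fin n₂ → Fin n₁, Function.Injective σ ∧
      ∀ j j' : Fin n₂, Γ₁.Adj (σ j) (σ j') → Γ₂.Adj j j' := by
  classical
  set ψ : GraphAlg p Γ₁ →ₐ[ZMod (p ^ 3)] Md p Γ₂ := (π p Γ₂).comp φ.toAlgHom with hψdef
  set x : Fin n₁ → Md p Γ₂ := fun i => ψ (GraphAlg.v p Γ₁ i) with hxdef
  have hsq : ∀ i, x i * x i = 0 := by
    intro i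
    rw [hxdef, ← map_mul, rel_vsq, map_zero]
  have hc : ∀ i, ∃ d, (x i).c = ((p ^ 2 : ℕ) : ZMod (p ^ 3)) * d := by
    intro i
    refine sq_zero ?_
    have := congrArg Md.c (hsq i)
    rw [Md.mul_c] at this
    exact this
  set W : Fin n₁ → Fin n₂ → ZMod p := fun i j => red p ((x i).v j) with hWdef
  -- the a-component of a product of images of v-generators
  have hac : ∀ i i' f, (x i * x i').a f = Md.κ p Γ₂ f (Md.sym p (x i).v (x i').v f) := by
    intro i i' f
    obtain ⟨d, hd⟩ := hc i
    obtain ⟨d', hd'⟩ := hc i'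
    rw [Md.mul_a, hd, hd', κ_p2_mul, κ_p2_mul, zero_mul, zero_mul, zero_add, zero_add]
  -- support of each row is (at most) a single column
  have hsupp : ∀ i k l, k ≠ l → W i k * W i l = 0 := by
    have main : ∀ (i : Fin n₁) (f : EPair n₂), W i f.1.1 * W i f.1.2 = 0 := by
      intro i f
      have h0 : (x i * x i).a f = 0 := by rw [hsq i, Md.zero_a]
      rw [hac i i f] at h0
      have h1 := κ_zero_red f _ h0
      have h2 : red p (Md.sym p (x i).v (x i).v f) = 2 * (W i f.1.1 * W i f.1.2) := by
        rw [Md.sym_apply, map_add, map_mul, map_mul, hWdef]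
        ring
      rw [h2] at h1
      exact (mul_eq_zero.mp h1).resolve_left (two_ne_zero' hodd)
    intro i k l hkl
    rcases lt_or_gt_of_ne hkl with h | h
    · exact main i ⟨(k, l), h⟩
    · have := main i ⟨(l, k), h⟩
      rw [mul_comm] at this
      exact this
  -- c-components reduce to zero
  have hcred : ∀ i, red p ((x i).c) = 0 := by
    intro i
    obtain ⟨d, hd⟩ := hc i
    rw [hd, red_p2_mul]
  -- every column supports some row
  have hspan : ∀ j : Fin n₂, ∃ i, W i j ≠ 0 := by
    intro j
    by_contra h0
    push_neg at h0
    obtain ⟨co, hco⟩ := mem_span_bas p Γ₁ (φ.symm (GraphAlg.v p Γ₂ j))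
    have hψv : ψ (φ.symm (GraphAlg.v p Γ₂ j)) = Vg p Γ₂ j := by
      rw [hψdef, AlgHom.comp_apply]
      have : φ.toAlgHom (φ.symm (GraphAlg.v p Γ₂ j)) = GraphAlg.v p Γ₂ j :=
        φ.apply_symm_apply _
      rw [this, π_v]
    have h1 : Vg p Γ₂ j = ∑ t, co t • ψ (bas t) := by
      rw [← hψv, hco, map_sum]
      congr 1
      funext t
      rw [map_smul]
    -- each basis image has vanishing reduced v-component at j
    have hterm : ∀ t : Option (GVar n₁), red p ((ψ (bas t)).v j) = 0 := by
      rintro (_ | s | e)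
      · show red p ((ψ (bas none)).v j) = 0
        have : (bas (p := p) (G := Γ₁) none) = 1 := rfl
        rw [this, map_one]
        simp
      · show red p ((ψ (bas (some (Sum.inl s)))).v j) = 0
        have : (bas (p := p) (G := Γ₁) (some (Sum.inl s))) = GraphAlg.v p Γ₁ s := rfl
        rw [this]
        exact h0 s
      · show red p ((ψ (bas (some (Sum.inr e)))).v j) = 0
        have hb : (bas (p := p) (G := Γ₁) (some (Sum.inr e))) = GraphAlg.a p Γ₁ e := rfl
        rw [hb, ← rel_vv p Γ₁ e, map_mul]
        show red p ((x e.1.1 * x e.1.2).v j) = 0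
        rw [Md.mul_v, Pi.add_apply, Pi.smul_apply, Pi.smul_apply, smul_eq_mul, smul_eq_mul,
          map_add, map_mul, map_mul, hcred e.1.1, hcred e.1.2, zero_mul, zero_mul, add_zero]
    have h2 := congrArg (fun m : Md p Γ₂ => red p (m.v j)) h1
    have h3 : red p ((Vg p Γ₂ j).v j) = 1 := by
      rw [Vg_v, Pi.single_eq_same, map_one]
    have h4 : red p ((∑ t, co t • ψ (bas t)).v j) = 0 := by
      have hv : (∑ t, co t • ψ (bas t)).v j = ∑ t, (co t • ψ (bas t)).v j := by
        classical
        induction (Finset.univ : Finset (Option (GVar n₁))) using Finset.induction_on with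
        | empty => simp
        | insert _ _ hne ih =>
            rw [Finset.sum_insert hne, Finset.sum_insert hne, Md.add_v, Pi.add_apply, ih]
      rw [hv, map_sum]
      refine Finset.sum_eq_zero ?_
      intro t _
      rw [Md.smul_v, Pi.smul_apply, smul_eq_mul, map_mul, hterm t, mul_zero]
    rw [h3, h4] at h2
    exact one_ne_zero h2
  -- define σ
  set σ : Fin n₂ → Fin n₁ := fun j => Classical.choose (hspan j) with hσdef
  have hσ : ∀ j, W (σ j) j ≠ 0 := fun j => Classical.choose_spec (hspan j)
  have hWz : ∀ j l, l ≠ j → W (σ j) l = 0 := by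
    intro j l hl
    have := hsupp (σ j) j l (fun h => hl h.symm)
    exact (mul_eq_zero.mp this).resolve_left (hσ j)
  have hinj : Function.Injective σ := by
    intro j j' h
    by_contra hne
    have h2 : W (σ j') j = 0 := hWz j' j hne
    rw [← h] at h2
    exact hσ j h2
  refine ⟨σ, hinj, ?_⟩
  intro j j' hAdj
  have hne : j ≠ j' := by
    rintro rfl
    exact Γ₁.irrefl hAdj
  -- p • (x (σ j) * x (σ j')) = 0 in the model
  obtain ⟨e', he', hor⟩ := rel_vv' p Γ₁ (Γ₁.ne_of_adj hAdj)
  have hAdj' : Γ₁.Adj e'.1.1 e'.1.2 := by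
    rcases hor with ⟨h1, h2⟩ | ⟨h1, h2⟩
    · rw [← h1, ← h2]; exact hAdj
    · rw [← h1, ← h2]; exact hAdj.symm
  have hp2 : ((p : ℕ) : ZMod (p ^ 3)) • (x (σ j) * x (σ j')) = 0 := by
    rw [hxdef]
    show ((p : ℕ) : ZMod (p ^ 3)) • (ψ (GraphAlg.v p Γ₁ (σ j)) * ψ (GraphAlg.v p Γ₁ (σ j'))) = 0
    rw [← map_mul, he', ← map_smul, rel_pa p Γ₁ hAdj', map_zero]
  -- the reduced symmetric product does not vanish at the sorted pair (j,j')
  have hsymne : ∀ f : EPair n₂, (f.1.1 = j ∧ f.1.2 = j') ∨ (f.1.1 = j' ∧ f.1.2 = j) →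
      red p (Md.sym p (x (σ j)).v (x (σ j')).v f) ≠ 0 := by
    rintro f (⟨h1, h2⟩ | ⟨h1, h2⟩)
    · rw [Md.sym_apply, map_add, map_mul, map_mul, h1, h2]
      show W (σ j) j * W (σ j') j' + W (σ j) j' * W (σ j') j ≠ 0
      rw [hWz j j' (fun h => hne h.symm), hWz j' j hne, zero_mul, add_zero]
      exact mul_ne_zero (hσ j) (hσ j')
    · rw [Md.sym_apply, map_add, map_mul, map_mul, h1, h2]
      show W (σ j) j' * W (σ j') j + W (σ j) j * W (σ j') j' ≠ 0
      rw [hWz j j' (fun h => hne h.symm), hWz j' j hne, zero_mul, zero_add]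
      exact mul_ne_zero (hσ j) (hσ j')
  by_contra hnadj
  -- pick the sorted pair f for (j, j')
  have main : ∀ f : EPair n₂, (f.1.1 = j ∧ f.1.2 = j') ∨ (f.1.1 = j' ∧ f.1.2 = j) → False := by
    rintro f hf
    have hnf : ¬ Γ₂.Adj f.1.1 f.1.2 := by
      rcases hf with ⟨h1, h2⟩ | ⟨h1, h2⟩
      · rw [h1, h2]; exact hnadj
      · rw [h1, h2]; exact fun h => hnadj h.symm
    have h3 := congrArg (fun m : Md p Γ₂ => m.a f) hp2
    rw [Md.smul_a, Md.zero_a, map_natCast, hac] at h3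
    exact hsymne f hf (pκ_zero_red f hnf _ h3)
  rcases lt_or_gt_of_ne hne with h | h
  · exact main ⟨(j, j'), h⟩ (Or.inl ⟨rfl, rfl⟩)
  · exact main ⟨(j', j), h⟩ (Or.inr ⟨rfl, rfl⟩)

lemma forward (hodd : p ≠ 2) {n₁ n₂ : ℕ} (Γ₁ : SimpleGraph (Fin n₁)) (Γ₂ : SimpleGraph (Fin n₂))
    (φ : GraphAlg p Γ₁ ≃ₐ[ZMod (p ^ 3)] GraphAlg p Γ₂) : Nonempty (Γ₁ ≃g Γ₂) := by
  classical
  obtain ⟨σ, σinj, σadj⟩ := key hodd Γ₁ Γ₂ φ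
  obtain ⟨τ, τinj, τadj⟩ := key hodd Γ₂ Γ₁ φ.symm
  have hn : n₁ = n₂ := le_antisymm
    (by simpa using Fintype.card_le_of_injective τ τinj)
    (by simpa using Fintype.card_le_of_injective σ σinj)
  subst hn
  set ρ : Fin n₁ → Fin n₁ := σ ∘ τ with hρdef
  have hρinj : Function.Injective ρ := σinj.comp τinj
  have hρ : ∀ i i', Γ₁.Adj (ρ i) (ρ i') → Γ₁.Adj i i' := by
    intro i i' h
    exact τadj i i' (σadj (τ i) (τ i') h)
  have hbij : Function.Bijective ρ := Finite.injective_iff_bijective.mp hρinj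
  set eq : Fin n₁ × Fin n₁ ≃ Fin n₁ × Fin n₁ :=
    (Equiv.ofBijective ρ hbij).prodCongr (Equiv.ofBijective ρ hbij) with heqdef
  have heq : ∀ z : Fin n₁ × Fin n₁, eq z = (ρ z.1, ρ z.2) := fun z => rfl
  set F : Finset (Fin n₁ × Fin n₁) := Finset.univ.filter (fun z => Γ₁.Adj z.1 z.2) with hFdef
  have hsub : F.map eq.symm.toEmbedding ⊆ F := by
    intro y hy
    rw [Finset.mem_map] at hy
    obtain ⟨z, hz, hzy⟩ := hy
    have hz2 : z = eq y := by
      rw [← hzy]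
      exact (eq.apply_symm_apply z).symm
    rw [hz2, heq] at hz
    rw [hFdef, Finset.mem_filter] at hz ⊢
    exact ⟨Finset.mem_univ y, hρ y.1 y.2 hz.2⟩
  have hFeq : F.map eq.symm.toEmbedding = F :=
    Finset.eq_of_subset_of_card_le hsub (le_of_eq (Finset.card_map _).symm)
  have hρ2 : ∀ i i', Γ₁.Adj i i' → Γ₁.Adj (ρ i) (ρ i') := by
    intro i i' hA
    have hmem : (i, i') ∈ F := by
      rw [hFdef, Finset.mem_filter]
      exact ⟨Finset.mem_univ _, hA⟩
    rw [← hFeq, Finset.mem_map] at hmem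
    obtain ⟨z, hz, hzy⟩ := hmem
    have hz2 : z = eq (i, i') := by
      rw [← hzy]
      exact (eq.apply_symm_apply z).symm
    rw [hz2, heq] at hz
    rw [hFdef, Finset.mem_filter] at hz
    exact hz.2
  have hbijτ : Function.Bijective τ := Finite.injective_iff_bijective.mp τinj
  refine ⟨⟨Equiv.ofBijective τ hbijτ, ?_⟩⟩
  intro a b
  constructor
  · exact τadj a b
  · intro h
    exact σadj (τ a) (τ b) (hρ2 a b h)
end Key

/-! ### Easy direction: a graph isomorphism induces an algebra isomorphism -/

section Easy
variable {p : ℕ} {n₁ n₂ : ℕ} {Γ₁ : SimpleGraph (Fin n₁)} {Γ₂ : SimpleGraph (Fin n₂)}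

def emap (ι : Γ₁ ≃g Γ₂) (e : EPair n₁) : EPair n₂ :=
  if h : ι e.1.1 < ι e.1.2 then ⟨(ι e.1.1, ι e.1.2), h⟩
  else ⟨(ι e.1.2, ι e.1.1), lt_of_le_of_ne (not_lt.mp h)
    (fun hq => epair_ne e (ι.injective hq).symm)⟩

lemma emap_pos (ι : Γ₁ ≃g Γ₂) {e : EPair n₁} (h : ι e.1.1 < ι e.1.2) :
    emap ι e = ⟨(ι e.1.1, ι e.1.2), h⟩ := dif_pos h

lemma emap_neg (ι : Γ₁ ≃g Γ₂) {e : EPair n₁} (h : ¬ ι e.1.1 < ι e.1.2) :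
    emap ι e = ⟨(ι e.1.2, ι e.1.1), lt_of_le_of_ne (not_lt.mp h)
      (fun hq => epair_ne e (ι.injective hq).symm)⟩ := dif_neg h

lemma emap_emap (ι : Γ₁ ≃g Γ₂) (e : EPair n₁) : emap ι.symm (emap ι e) = e := by
  by_cases h : ι e.1.1 < ι e.1.2
  · rw [emap_pos ι h]
    have h2 : ι.symm (ι e.1.1) < ι.symm (ι e.1.2) := by
      rw [ι.symm_apply_apply, ι.symm_apply_apply]
      exact e.2
    rw [show emap ι.symm ⟨(ι e.1.1, ι e.1.2), h⟩ = ⟨(ι.symm (ι e.1.1), ι.symm (ι e.1.2)), h2⟩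
      from dif_pos h2]
    exact epair_eq (ι.symm_apply_apply _) (ι.symm_apply_apply _)
  · rw [emap_neg ι h]
    have h2 : ¬ ι.symm (ι e.1.2) < ι.symm (ι e.1.1) := by
      rw [ι.symm_apply_apply, ι.symm_apply_apply]
      exact not_lt.mpr (le_of_lt e.2)
    rw [show emap ι.symm ⟨(ι e.1.2, ι e.1.1), _⟩ = ⟨(ι.symm (ι e.1.1), ι.symm (ι e.1.2)), _⟩
      from dif_neg h2]
    exact epair_eq (ι.symm_apply_apply _) (ι.symm_apply_apply _)

def varMap (ι : Γ₁ ≃g Γ₂) : GVar n₁ → GVar n₂ := Sum.map (⇑ι) (emap ι)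

@[simp] lemma varMap_inl (ι : Γ₁ ≃g Γ₂) (i : Fin n₁) :
    varMap ι (Sum.inl i) = Sum.inl (ι i) := rfl

@[simp] lemma varMap_inr (ι : Γ₁ ≃g Γ₂) (e : EPair n₁) :
    varMap ι (Sum.inr e) = Sum.inr (emap ι e) := rfl

lemma varMap_varMap (ι : Γ₁ ≃g Γ₂) (s : GVar n₁) : varMap ι.symm (varMap ι s) = s := by
  cases s with
  | inl i => show Sum.inl (ι.symm (ι i)) = Sum.inl i; rw [ι.symm_apply_apply]
  | inr e => show Sum.inr (emap ι.symm (emap ι e)) = Sum.inr e; rw [emap_emap]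

variable (p) in
lemma rename_rels (ι : Γ₁ ≃g Γ₂) :
    ∀ r ∈ graphRels p Γ₁, rename (varMap ι) r ∈ graphRels p Γ₂ := by
  rintro r (⟨i, rfl⟩ | ⟨e, rfl⟩ | ⟨e, rfl⟩ | ⟨e, i, rfl⟩ | ⟨e, f, rfl⟩ | ⟨e, he, rfl⟩ |
    ⟨e, he, rfl⟩)
  · rw [map_pow, rename_X]
    exact Or.inl ⟨ι i, rfl⟩
  · rw [map_sub, map_mul, rename_X, rename_X, rename_X]
    by_cases h : ι e.1.1 < ι e.1.2
    · refine Or.inr (Or.inl ⟨emap ι e, ?_⟩)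
      rw [varMap_inl, varMap_inl, varMap_inr, emap_pos ι h]
    · refine Or.inr (Or.inr (Or.inl ⟨emap ι e, ?_⟩))
      rw [varMap_inl, varMap_inl, varMap_inr, emap_neg ι h]
  · rw [map_sub, map_mul, rename_X, rename_X, rename_X]
    by_cases h : ι e.1.1 < ι e.1.2
    · refine Or.inr (Or.inr (Or.inl ⟨emap ι e, ?_⟩))
      rw [varMap_inl, varMap_inl, varMap_inr, emap_pos ι h]
    · refine Or.inr (Or.inl ⟨emap ι e, ?_⟩)
      rw [varMap_inl, varMap_inl, varMap_inr, emap_neg ι h]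
  · rw [map_mul, rename_X, rename_X]
    exact Or.inr (Or.inr (Or.inr (Or.inl ⟨emap ι e, ι i, rfl⟩)))
  · rw [map_mul, rename_X, rename_X]
    exact Or.inr (Or.inr (Or.inr (Or.inr (Or.inl ⟨emap ι e, emap ι f, rfl⟩))))
  · rw [map_mul, map_natCast, rename_X]
    refine Or.inr (Or.inr (Or.inr (Or.inr (Or.inr (Or.inl ⟨emap ι e, ?_, rfl⟩)))))
    by_cases h : ι e.1.1 < ι e.1.2
    · rw [emap_pos ι h]
      exact ι.map_adj_iff.mpr he
    · rw [emap_neg ι h]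
      exact (ι.map_adj_iff.mpr he).symm
  · rw [map_mul, map_pow, map_natCast, rename_X]
    refine Or.inr (Or.inr (Or.inr (Or.inr (Or.inr (Or.inr ⟨emap ι e, ?_, rfl⟩)))))
    by_cases h : ι e.1.1 < ι e.1.2
    · rw [emap_pos ι h]
      exact fun hx => he (ι.map_adj_iff.mp hx)
    · rw [emap_neg ι h]
      exact fun hx => he (ι.map_adj_iff.mp hx.symm)

variable (p) in
def fwdA (ι : Γ₁ ≃g Γ₂) : GraphAlg p Γ₁ →ₐ[ZMod (p ^ 3)] GraphAlg p Γ₂ :=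
  Ideal.Quotient.liftₐ _
    ((Ideal.Quotient.mkₐ (ZMod (p ^ 3)) (Ideal.span (graphRels p Γ₂))).comp
      (rename (R := ZMod (p ^ 3)) (varMap ι)))
    (fun a ha => by
      have hle : Ideal.span (graphRels p Γ₁) ≤ RingHom.ker
          ((Ideal.Quotient.mkₐ (ZMod (p ^ 3)) (Ideal.span (graphRels p Γ₂))).comp
            (rename (R := ZMod (p ^ 3)) (varMap ι))) := by
        refine Ideal.span_le.mpr (fun r hr => ?_)
        show Ideal.Quotient.mkₐ (ZMod (p ^ 3)) (Ideal.span (graphRels p Γ₂))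
            (rename (R := ZMod (p ^ 3)) (varMap ι) r) = 0
        rw [Ideal.Quotient.mkₐ_eq_mk]
        exact Ideal.Quotient.eq_zero_iff_mem.mpr
          (Ideal.subset_span (rename_rels p ι r hr))
      exact hle ha)

lemma fwdA_mk (ι : Γ₁ ≃g Γ₂) (f : GPoly p n₁) :
    fwdA p ι (Ideal.Quotient.mk _ f) = Ideal.Quotient.mk _ (rename (varMap ι) f) := rfl

lemma varMap_varMap' (ι : Γ₁ ≃g Γ₂) (s : GVar n₂) : varMap ι (varMap ι.symm s) = s := by
  have h := varMap_varMap ι.symm s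
  exact h

variable (p) in
def bwdEquiv (ι : Γ₁ ≃g Γ₂) : GraphAlg p Γ₁ ≃ₐ[ZMod (p ^ 3)] GraphAlg p Γ₂ := by
  refine AlgEquiv.ofAlgHom (fwdA p ι) (fwdA p ι.symm) ?_ ?_
  · refine Ideal.Quotient.algHom_ext _ (MvPolynomial.algHom_ext (fun s => ?_))
    show fwdA p ι (fwdA p ι.symm (Ideal.Quotient.mk _ (X s))) = Ideal.Quotient.mk _ (X s)
    rw [fwdA_mk, rename_X, fwdA_mk, rename_X, varMap_varMap']
  · refine Ideal.Quotient.algHom_ext _ (MvPolynomial.algHom_ext (fun s => ?_))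
    show fwdA p ι.symm (fwdA p ι (Ideal.Quotient.mk _ (X s))) = Ideal.Quotient.mk _ (X s)
    rw [fwdA_mk, rename_X, fwdA_mk, rename_X, varMap_varMap]

end Easy
end Md
end GA


/-- For an odd prime `p` and undirected loopless finite graphs `Γ₁`, `Γ₂`,
the graph-algebras `R(Γ₁)` and `R(Γ₂)` are isomorphic as `(ℤ/p³ℤ)`-algebras if and only if
the graphs `Γ₁` and `Γ₂` are isomorphic. -/
theorem GraphAlg.algEquiv_iff_graph_iso
    (p : ℕ) [Fact p.Prime] (hodd : p ≠ 2) {n₁ n₂ : ℕ}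
    (Γ₁ : SimpleGraph (Fin n₁)) (Γ₂ : SimpleGraph (Fin n₂)) :
    Nonempty (GraphAlg p Γ₁ ≃ₐ[ZMod (p ^ 3)] GraphAlg p Γ₂) ↔ Nonempty (Γ₁ ≃g Γ₂) := by
  constructor
  · rintro ⟨φ⟩
    exact GA.Md.forward hodd Γ₁ Γ₂ φ
  · rintro ⟨ι⟩
    exact ⟨GA.Md.bwdEquiv p ι⟩
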